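/- Let B^e be a noncrossing matching on E_n = {0,2,...,4n-2} and B^o a noncrossing matching on O_n = {1,3,...,4n-1}. Then the total number of crossing pairs (e,o) with e in B^e and o in B^o is at least n. -/

import Mathlib

open scoped Classical

def IsMatchingOn (M : Finset (Finset ℕ)) (S : Finset ℕ) : Prop :=
  (∀ b ∈ M, b.card = 2) ∧
  (∀ b ∈ M, ∀ b' ∈ M, b ≠ b' → Disjoint b b') ∧
  (∀ x, x ∈ S ↔ ∃ b ∈ M, x ∈ b)

def Cross (e o : Finset ℕ) : Prop :=
  (∃ i ∈ e, ∃ k ∈ e, ∃ j ∈ o, ∃ l ∈ o, i < j ∧ j < k ∧ k < l) ∨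
  (∃ i ∈ o, ∃ k ∈ o, ∃ j ∈ e, ∃ l ∈ e, i < j ∧ j < k ∧ k < l)

def IsNCMatchingOn (M : Finset (Finset ℕ)) (S : Finset ℕ) : Prop :=
  IsMatchingOn M S ∧ ∀ b ∈ M, ∀ b' ∈ M, b ≠ b' → ¬ Cross b b'

def En (n : ℕ) : Finset ℕ := (Finset.range (2 * n)).image (fun i => 2 * i)

def On (n : ℕ) : Finset ℕ := (Finset.range (2 * n)).image (fun i => 2 * i + 1)

def IsBasketball (n : ℕ) (Be Bo : Finset (Finset ℕ)) : Prop :=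
  IsNCMatchingOn Be (En n) ∧ IsNCMatchingOn Bo (On n) ∧
  ∀ e ∈ Be, (Bo.filter (fun o => Cross e o)).card = 1

def IsNCPartitionOn (Q : Finset (Finset ℕ)) (S : Finset ℕ) : Prop :=
  (∀ b ∈ Q, b.Nonempty) ∧
  (∀ b ∈ Q, ∀ b' ∈ Q, b ≠ b' → Disjoint b b') ∧
  (∀ x, x ∈ S ↔ ∃ b ∈ Q, x ∈ b) ∧
  (∀ b ∈ Q, ∀ b' ∈ Q, b ≠ b' → ¬ Cross b b')

lemma matching_card {M : Finset (Finset ℕ)} {S : Finset ℕ}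
    (h : IsMatchingOn M S) : S.card = 2 * M.card := by
  obtain ⟨h2, hdisj, hcov⟩ := h
  have hS : S = M.biUnion (fun b => b) := by
    ext x
    simp only [Finset.mem_biUnion]
    exact hcov x
  rw [hS, Finset.card_biUnion (fun b hb b' hb' hne => hdisj b hb b' hb' hne)]
  rw [Finset.sum_congr rfl (fun b hb => h2 b hb)]
  simp [mul_comm]

lemma matching_even_inter {M : Finset (Finset ℕ)} {S T : Finset ℕ}
    (h : IsMatchingOn M S)
    (hT : ∀ b ∈ M, ∀ x ∈ b, x ∈ T → b ⊆ T) :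
    Even ((S ∩ T).card) := by
  obtain ⟨h2, hdisj, hcov⟩ := h
  have hST : S ∩ T = (M.filter (fun b => b ⊆ T)).biUnion (fun b => b) := by
    ext x
    simp only [Finset.mem_inter, Finset.mem_biUnion, Finset.mem_filter]
    constructor
    · rintro ⟨hxS, hxT⟩
      obtain ⟨b, hb, hxb⟩ := (hcov x).1 hxS
      exact ⟨b, ⟨hb, hT b hb x hxb hxT⟩, hxb⟩
    · rintro ⟨b, ⟨hb, hbT⟩, hxb⟩
      exact ⟨(hcov x).2 ⟨b, hb, hxb⟩, hbT hxb⟩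
  rw [hST, Finset.card_biUnion (fun b hb b' hb' hne =>
    hdisj b (Finset.mem_filter.1 hb).1 b' (Finset.mem_filter.1 hb').1 hne)]
  rw [Finset.sum_congr rfl (fun b hb => h2 b (Finset.mem_filter.1 hb).1)]
  simp [mul_comm, Finset.sum_const, even_iff_two_dvd]

lemma mem_En {n x : ℕ} : x ∈ En n ↔ Even x ∧ x < 4 * n := by
  simp only [En, Finset.mem_image, Finset.mem_range]
  constructor
  · rintro ⟨i, hi, rfl⟩
    exact ⟨⟨i, by ring⟩, by omega⟩
  · rintro ⟨⟨i, rfl⟩, hx⟩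
    exact ⟨i, by omega, by ring⟩

lemma mem_On {n x : ℕ} : x ∈ On n ↔ Odd x ∧ x < 4 * n := by
  simp only [On, Finset.mem_image, Finset.mem_range]
  constructor
  · rintro ⟨i, hi, rfl⟩
    exact ⟨⟨i, by ring⟩, by omega⟩
  · rintro ⟨⟨i, rfl⟩, hx⟩
    exact ⟨i, by omega, by ring⟩

lemma cross_of {e b : Finset ℕ} {i k x y : ℕ}
    (hi : i ∈ e) (hk : k ∈ e) (hx : x ∈ b) (hy : y ∈ b)
    (h1 : i < x) (h2 : x < k) (h3 : y < i ∨ k < y) : Cross e b := by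
  rcases h3 with h3 | h3
  · exact Or.inr ⟨y, hy, x, hx, i, hi, k, hk, h3, h1, h2⟩
  · exact Or.inl ⟨i, hi, k, hk, x, hx, y, hy, h1, h2, h3⟩

lemma exists_cross {n : ℕ} {Be Bo : Finset (Finset ℕ)}
    (hBe : IsNCMatchingOn Be (En n)) (hBo : IsNCMatchingOn Bo (On n))
    {e : Finset ℕ} (he : e ∈ Be) : ∃ o ∈ Bo, Cross e o := by
  by_contra hcon
  push_neg at hcon
  obtain ⟨a, b, hab, heab⟩ := Finset.card_eq_two.1 (hBe.1.1 e he)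
  -- let i be the smaller, k the larger
  obtain ⟨i, k, hik, hie, hke⟩ : ∃ i k : ℕ, i < k ∧ i ∈ e ∧ k ∈ e := by
    rcases lt_or_gt_of_ne hab with h | h
    · exact ⟨a, b, h, by simp [heab], by simp [heab]⟩
    · exact ⟨b, a, h, by simp [heab], by simp [heab]⟩
  have hiE : i ∈ En n := (hBe.1.2.2 i).2 ⟨e, he, hie⟩
  have hkE : k ∈ En n := (hBe.1.2.2 k).2 ⟨e, he, hke⟩
  obtain ⟨hiev, hilt⟩ := mem_En.1 hiE
  obtain ⟨hkev, hklt⟩ := mem_En.1 hkE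
  have hxe : ∀ x, i < x → x < k → x ∉ e := by
    intro x h1 h2 hxe
    have : x = a ∨ x = b := by
      have := heab ▸ hxe
      simpa using this
    have ha' : a ∈ e := by simp [heab]
    have hb' : b ∈ e := by simp [heab]
    have hia : i = a ∨ i = b := by have := hie; rw [heab] at this; simpa using this
    have hka : k = a ∨ k = b := by have := hke; rw [heab] at this; simpa using this
    omega
  -- odd points inside (i,k) are matched inside
  have hOdd : Even ((On n ∩ Finset.Ioo i k).card) := by
    apply matching_even_inter hBo.1
    intro o ho x hxo hxT y hyo
    rw [Finset.mem_Ioo] at hxT ⊢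
    by_contra hyT
    have hyO : y ∈ On n := (hBo.1.2.2 y).2 ⟨o, ho, hyo⟩
    obtain ⟨hyodd, _⟩ := mem_On.1 hyO
    have hyi : y ≠ i := by rintro rfl; exact (Nat.not_odd_iff_even.2 hiev) hyodd
    have hyk : y ≠ k := by rintro rfl; exact (Nat.not_odd_iff_even.2 hkev) hyodd
    exact hcon o ho (cross_of hie hke hxo hyo hxT.1 hxT.2 (by omega))
  -- even points inside (i,k) are matched inside
  have hEven : Even ((En n ∩ Finset.Ioo i k).card) := by
    apply matching_even_inter hBe.1
    intro b' hb' x hxb hxT y hyb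
    rw [Finset.mem_Ioo] at hxT ⊢
    have hne : e ≠ b' := by
      rintro rfl
      exact hxe x hxT.1 hxT.2 hxb
    by_contra hyT
    have hyE : y ∈ En n := (hBe.1.2.2 y).2 ⟨b', hb', hyb⟩
    have hdisj := hBe.1.2.1 e he b' hb' hne
    have hyi : y ≠ i := by
      rintro rfl
      exact (Finset.disjoint_left.1 hdisj hie) hyb
    have hyk : y ≠ k := by
      rintro rfl
      exact (Finset.disjoint_left.1 hdisj hke) hyb
    exact hBe.2 e he b' hb' hne (cross_of hie hke hxb hyb hxT.1 hxT.2 (by omega))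
  -- but the interval (i,k) has an odd number of points
  have hsplit : (En n ∩ Finset.Ioo i k) ∪ (On n ∩ Finset.Ioo i k) = Finset.Ioo i k := by
    ext m
    simp only [Finset.mem_union, Finset.mem_inter, Finset.mem_Ioo]
    constructor
    · rintro (⟨_, h⟩ | ⟨_, h⟩) <;> exact h
    · intro hm
      rcases Nat.even_or_odd m with hme | hmo
      · exact Or.inl ⟨mem_En.2 ⟨hme, by omega⟩, hm⟩
      · exact Or.inr ⟨mem_On.2 ⟨hmo, by omega⟩, hm⟩
  have hdisj2 : Disjoint (En n ∩ Finset.Ioo i k) (On n ∩ Finset.Ioo i k) := by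
    rw [Finset.disjoint_left]
    intro m hm1 hm2
    have h1 := (mem_En.1 (Finset.mem_inter.1 hm1).1).1
    have h2 := (mem_On.1 (Finset.mem_inter.1 hm2).1).1
    exact (Nat.not_odd_iff_even.2 h1) h2
  have hsum : (En n ∩ Finset.Ioo i k).card + (On n ∩ Finset.Ioo i k).card
      = k - i - 1 := by
    rw [← Finset.card_union_of_disjoint hdisj2, hsplit, Nat.card_Ioo]
  obtain ⟨p, hp⟩ := hOdd
  obtain ⟨q, hq⟩ := hEven
  obtain ⟨r, hr⟩ := hiev
  obtain ⟨s, hs⟩ := hkev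
  omega

lemma En_card (n : ℕ) : (En n).card = 2 * n := by
  rw [En, Finset.card_image_of_injective _ (fun a b h => by omega)]
  simp

theorem stmt_3 (n : ℕ) (Be Bo : Finset (Finset ℕ))
    (hBe : IsNCMatchingOn Be (En n)) (hBo : IsNCMatchingOn Bo (On n)) :
    n ≤ ((Be ×ˢ Bo).filter (fun p => Cross p.1 p.2)).card := by
  have hBecard : Be.card = n := by
    have h1 := matching_card hBe.1
    have h2 := En_card n
    omega
  have key : ∀ e ∈ Be, ∃ o ∈ Bo, Cross e o := fun e he => exists_cross hBe hBo he
  rw [← hBecard]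
  apply Finset.card_le_card_of_injOn
    (fun e => (e, if h : ∃ o ∈ Bo, Cross e o then h.choose else ∅))
  · intro e he
    have h : ∃ o ∈ Bo, Cross e o := key e he
    simp only [dif_pos h]
    rw [Finset.mem_coe, Finset.mem_filter, Finset.mem_product]
    exact ⟨⟨he, h.choose_spec.1⟩, h.choose_spec.2⟩
  · intro e _ e' _ h
    exact congrArg Prod.fst h
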